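/- For a positive integer N, the set Γ₀(N) of matrices (a b; c d) in SL₂(ℤ) with N ∣ c is a subgroup of SL₂(ℤ), and its index in SL₂(ℤ) equals N · ∏_{p ∣ N} (1 + 1/p), the product running over the distinct primes dividing N. -/

import Mathlib

open CongruenceSubgroup MatrixGroups

namespace Gamma0IndexAux

open Matrix

/-- The set of unimodular pairs mod `n`. -/
abbrev P (n : ℕ) : Type := {x : ZMod n × ZMod n // IsCoprime x.1 x.2}

/-- The number of unimodular pairs mod `n`. -/
noncomputable def f (n : ℕ) : ℕ := Nat.card (P n)

lemma isCoprime_prod_iff {R S : Type*} [CommSemiring R] [CommSemiring S]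
    (a b : R × S) : IsCoprime a b ↔ IsCoprime a.1 b.1 ∧ IsCoprime a.2 b.2 := by
  constructor
  · rintro ⟨x, y, h⟩
    have h1 := congrArg Prod.fst h
    have h2 := congrArg Prod.snd h
    exact ⟨⟨x.1, y.1, h1⟩, ⟨x.2, y.2, h2⟩⟩
  · rintro ⟨⟨x1, y1, h1⟩, ⟨x2, y2, h2⟩⟩
    exact ⟨(x1, x2), (y1, y2), Prod.ext h1 h2⟩

lemma isCoprime_map_iff {R S : Type*} [CommSemiring R] [CommSemiring S] (e : R ≃+* S)
    (a b : R) : IsCoprime (e a) (e b) ↔ IsCoprime a b := by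
  constructor
  · intro h
    simpa using h.map (e.symm : S →+* R)
  · intro h
    exact h.map (e : R →+* S)

lemma f_one : f 1 = 1 := by
  rw [f, Nat.card_eq_one_iff_unique]
  refine ⟨⟨fun a b => Subtype.ext (Subsingleton.elim _ _)⟩, ⟨⟨(0, 0), ⟨0, 0, Subsingleton.elim _ _⟩⟩⟩⟩

lemma f_mul (m n : ℕ) (h : m.Coprime n) : f (m * n) = f m * f n := by
  rw [f, f, f, ← Nat.card_prod]
  refine Nat.card_congr ?_
  have e := ZMod.chineseRemainder h
  refine Equiv.trans (Equiv.subtypeEquiv ((e.toEquiv.prodCongr e.toEquiv).trans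
    (Equiv.prodProdProdComm _ _ _ _)) fun x => ?_)
    (Equiv.subtypeProdEquivProd (p := fun y : ZMod m × ZMod m => IsCoprime y.1 y.2)
      (q := fun y : ZMod n × ZMod n => IsCoprime y.1 y.2))
  simp only [Equiv.trans_apply, Equiv.prodCongr_apply, RingEquiv.toEquiv_eq_coe, Prod.map,
    Equiv.prodProdProdComm_apply, EquivLike.coe_coe]
  rw [← isCoprime_map_iff e x.1 x.2, isCoprime_prod_iff]

lemma isUnit_zmod_pow_iff {p k : ℕ} (hp : p.Prime) (hk : k ≠ 0) (x : ZMod (p ^ k)) :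
    IsUnit x ↔ ¬ p ∣ x.val := by
  haveI : NeZero (p ^ k) := ⟨pow_ne_zero k hp.pos.ne'⟩
  conv_lhs => rw [← ZMod.natCast_rightInverse x]
  rw [ZMod.isUnit_iff_coprime, Nat.coprime_pow_right_iff (Nat.pos_of_ne_zero hk),
    Nat.coprime_comm, hp.coprime_iff_not_dvd]

lemma isCoprime_zmod_pow_iff {p k : ℕ} (hp : p.Prime) (hk : k ≠ 0) (c d : ZMod (p ^ k)) :
    IsCoprime c d ↔ IsUnit c ∨ IsUnit d := by
  haveI : NeZero (p ^ k) := ⟨pow_ne_zero k hp.pos.ne'⟩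
  haveI := Fact.mk hp
  constructor
  · rintro ⟨x, y, h⟩
    by_contra hcon
    push_neg at hcon
    obtain ⟨hc, hd⟩ := hcon
    rw [isUnit_zmod_pow_iff hp hk, not_not] at hc hd
    let ψ : ZMod (p ^ k) →+* ZMod p := ZMod.castHom (dvd_pow_self p hk) (ZMod p)
    have hc' : ψ c = 0 := by
      rw [← ZMod.natCast_rightInverse c, map_natCast]
      exact (ZMod.natCast_eq_zero_iff _ _).mpr hc
    have hd' : ψ d = 0 := by
      rw [← ZMod.natCast_rightInverse d, map_natCast]
      exact (ZMod.natCast_eq_zero_iff _ _).mpr hd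
    have := congrArg ψ h
    rw [_root_.map_add, _root_.map_mul, _root_.map_mul, _root_.map_one, hc', hd'] at this
    simp at this
  · rintro (⟨u, rfl⟩ | ⟨u, rfl⟩)
    · exact ⟨(↑u⁻¹ : (ZMod (p ^ k))ˣ), 0, by simp⟩
    · exact ⟨0, (↑u⁻¹ : (ZMod (p ^ k))ˣ), by simp⟩

/-- units of a commutative monoid are equivalent to the subtype of unit elements -/
noncomputable def unitsEquivIsUnit {M : Type*} [CommMonoid M] : Mˣ ≃ {x : M // IsUnit x} where
  toFun u := ⟨u, u.isUnit⟩
  invFun x := x.2.unit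
  left_inv u := Units.ext u.isUnit.unit_spec
  right_inv x := Subtype.ext x.2.unit_spec

lemma card_not_isUnit {p k : ℕ} (hp : p.Prime) (hk : k ≠ 0) :
    Nat.card {x : ZMod (p ^ k) // ¬ IsUnit x} = p ^ (k - 1) := by
  haveI : NeZero (p ^ k) := ⟨pow_ne_zero k hp.pos.ne'⟩
  have h1 : Fintype.card {x : ZMod (p ^ k) // IsUnit x} = (p ^ k).totient := by
    rw [← Nat.card_eq_fintype_card, Nat.card_congr unitsEquivIsUnit.symm,
      Nat.card_eq_fintype_card, ZMod.card_units_eq_totient]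
  rw [Nat.card_eq_fintype_card, Fintype.card_subtype_compl, h1, ZMod.card (p ^ k),
    Nat.totient_prime_pow hp (Nat.pos_of_ne_zero hk)]
  have h2 : p ^ k = p ^ (k - 1) * p := by
    rw [← pow_succ, Nat.sub_add_cancel (Nat.one_le_iff_ne_zero.mpr hk)]
  have h3 : 1 ≤ p := hp.one_lt.le
  rw [h2, ← Nat.mul_sub, Nat.sub_sub_self h3, mul_one]

lemma f_prime_pow {p k : ℕ} (hp : p.Prime) (hk : k ≠ 0) :
    f (p ^ k) = (p ^ k) ^ 2 - (p ^ (k - 1)) ^ 2 := by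
  haveI : NeZero (p ^ k) := ⟨pow_ne_zero k hp.pos.ne'⟩
  rw [f]
  have key : ∀ x : ZMod (p ^ k) × ZMod (p ^ k),
      IsCoprime x.1 x.2 ↔ ¬ (¬ IsUnit x.1 ∧ ¬ IsUnit x.2) := by
    intro x
    rw [isCoprime_zmod_pow_iff hp hk]
    tauto
  have heq : Fintype.card {x : ZMod (p ^ k) × ZMod (p ^ k) // ¬ IsUnit x.1 ∧ ¬ IsUnit x.2}
      = p ^ (k - 1) * p ^ (k - 1) := by
    rw [← Nat.card_eq_fintype_card,
      Nat.card_congr (Equiv.subtypeProdEquivProd (p := fun x : ZMod (p ^ k) => ¬ IsUnit x)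
        (q := fun x : ZMod (p ^ k) => ¬ IsUnit x)), Nat.card_prod,
      card_not_isUnit hp hk]
  rw [Nat.card_congr (Equiv.subtypeEquivRight key), Nat.card_eq_fintype_card,
    Fintype.card_subtype_compl, heq, Fintype.card_prod, ZMod.card (p ^ k), sq, sq]

lemma key_coprime_progression (a b n : ℕ) (ha : a ≠ 0)
    (h : ∀ p : ℕ, p.Prime → p ∣ a → p ∣ b → ¬ p ∣ n) :
    ∃ t : ℕ, Nat.Coprime a (b + t * n) := by
  classical
  refine ⟨∏ p ∈ a.primeFactors.filter (fun p => ¬ p ∣ b), p, ?_⟩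
  set t := ∏ p ∈ a.primeFactors.filter (fun p => ¬ p ∣ b), p with ht
  by_contra hg
  obtain ⟨p, hp, hpd⟩ := Nat.exists_prime_and_dvd hg
  have hpa : p ∣ a := hpd.trans (Nat.gcd_dvd_left _ _)
  have hpb : p ∣ b + t * n := hpd.trans (Nat.gcd_dvd_right _ _)
  by_cases hb : p ∣ b
  · have hptn : p ∣ t * n := by
      have := Nat.dvd_sub hpb hb
      simpa using this
    rcases (Nat.Prime.dvd_mul hp).mp hptn with hpt | hpn
    · obtain ⟨q, hq, hpq⟩ := hp.prime.exists_mem_finset_dvd hpt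
      obtain ⟨hq1, hq2⟩ := Finset.mem_filter.mp hq
      have hqprime := Nat.prime_of_mem_primeFactors hq1
      rw [Nat.prime_dvd_prime_iff_eq hp hqprime] at hpq
      exact hq2 (hpq ▸ hb)
    · exact h p hp hpa hb hpn
  · have hmem : p ∈ a.primeFactors.filter (fun p => ¬ p ∣ b) :=
      Finset.mem_filter.mpr ⟨Nat.mem_primeFactors.mpr ⟨hp, hpa, ha⟩, hb⟩
    have hpt : p ∣ t := Finset.dvd_prod_of_mem _ hmem
    have : p ∣ b := by
      have := Nat.dvd_sub hpb (hpt.mul_right n)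
      simpa using this
    exact hb this

lemma exists_coprime_lift {N : ℕ} (hN : 0 < N) (c d : ZMod N) (h : IsCoprime c d) :
    ∃ a b : ℤ, ((a : ZMod N) = c) ∧ ((b : ZMod N) = d) ∧ IsCoprime a b := by
  haveI : NeZero N := ⟨hN.ne'⟩
  obtain ⟨x, y, hxy⟩ := h
  set a : ℕ := if c.val = 0 then N else c.val with hadef
  have ha0 : a ≠ 0 := by
    rw [hadef]
    split_ifs with hc
    · exact hN.ne'
    · exact hc
  have hac : ((a : ℕ) : ZMod N) = c := by
    rw [hadef]
    split_ifs with hc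
    · rw [ZMod.natCast_self, ← ZMod.natCast_rightInverse c, hc, Nat.cast_zero]
    · exact ZMod.natCast_rightInverse c
  have hrel : ∃ z : ℤ, (x.val : ℤ) * a + (y.val : ℤ) * d.val + z * N = 1 := by
    have h1 : ((((x.val * a + y.val * d.val : ℕ) : ℤ) - 1 : ℤ) : ZMod N) = 0 := by
      push_cast
      rw [ZMod.natCast_rightInverse x, ZMod.natCast_rightInverse y, hac,
        ZMod.natCast_rightInverse d, hxy, sub_self]
    obtain ⟨z, hz⟩ := (ZMod.intCast_zmod_eq_zero_iff_dvd _ N).mp h1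
    refine ⟨-z, ?_⟩
    push_cast at hz ⊢
    linarith
  obtain ⟨z, hz⟩ := hrel
  have hkey : ∀ p : ℕ, p.Prime → p ∣ a → p ∣ d.val → ¬ p ∣ N := by
    intro p hp hpa hpd hpN
    have h1 : (p : ℤ) ∣ 1 := by
      rw [← hz]
      refine dvd_add (dvd_add ?_ ?_) ?_
      · exact Dvd.dvd.mul_left (Int.natCast_dvd_natCast.mpr hpa) _
      · exact Dvd.dvd.mul_left (Int.natCast_dvd_natCast.mpr hpd) _
      · exact Dvd.dvd.mul_left (Int.natCast_dvd_natCast.mpr hpN) _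
    rw [show (1 : ℤ) = ((1 : ℕ) : ℤ) by norm_num, Int.natCast_dvd_natCast] at h1
    exact hp.one_lt.ne' (Nat.dvd_one.mp h1)
  obtain ⟨t, hcop⟩ := key_coprime_progression a d.val N ha0 hkey
  refine ⟨(a : ℤ), ((d.val + t * N : ℕ) : ℤ), ?_, ?_, ?_⟩
  · push_cast
    exact hac
  · push_cast [ZMod.natCast_self]
    rw [mul_zero, add_zero]
    exact ZMod.natCast_rightInverse d
  · exact Nat.isCoprime_iff_coprime.mpr hcop

/-- Primitive vectors mod `N`. -/
abbrev V (N : ℕ) : Type := {v : Fin 2 → ZMod N // IsCoprime (v 0) (v 1)}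

/-- Reduction of integer matrices mod `N`. -/
def m (N : ℕ) : Matrix (Fin 2) (Fin 2) ℤ →+* Matrix (Fin 2) (Fin 2) (ZMod N) :=
  (Int.castRingHom (ZMod N)).mapMatrix

@[simp] lemma m_apply (N : ℕ) (A : Matrix (Fin 2) (Fin 2) ℤ) (i j : Fin 2) :
    m N A i j = ((A i j : ℤ) : ZMod N) := rfl

lemma m_mul_inv (N : ℕ) (g : SL(2, ℤ)) :
    m N ↑g * m N ↑(g⁻¹) = 1 := by
  rw [← _root_.map_mul, ← Matrix.SpecialLinearGroup.coe_mul, mul_inv_cancel,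
    Matrix.SpecialLinearGroup.coe_one, _root_.map_one]

lemma m_inv_mul (N : ℕ) (g : SL(2, ℤ)) :
    m N ↑(g⁻¹) * m N ↑g = 1 := by
  rw [← _root_.map_mul, ← Matrix.SpecialLinearGroup.coe_mul, inv_mul_cancel,
    Matrix.SpecialLinearGroup.coe_one, _root_.map_one]

lemma vecMul_eq_of {N : ℕ} {A B : Matrix (Fin 2) (Fin 2) (ZMod N)} (hAB : A * B = 1)
    {w u : Fin 2 → ZMod N} (h : w ᵥ* A = u) : u ᵥ* B = w := by
  rw [← h, Matrix.vecMul_vecMul, hAB, Matrix.vecMul_one]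

lemma prim_vecMul {N : ℕ} {v : Fin 2 → ZMod N} {A B : Matrix (Fin 2) (Fin 2) (ZMod N)}
    (hAB : A * B = 1) (hv : IsCoprime (v 0) (v 1)) :
    IsCoprime ((v ᵥ* A) 0) ((v ᵥ* A) 1) := by
  obtain ⟨x, y, h⟩ := hv
  have hvB : (v ᵥ* A) ᵥ* B = v := vecMul_eq_of hAB rfl
  refine ⟨x * B 0 0 + y * B 0 1, x * B 1 0 + y * B 1 1, ?_⟩
  have h0 : v 0 = (v ᵥ* A) 0 * B 0 0 + (v ᵥ* A) 1 * B 1 0 := by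
    conv_lhs => rw [← hvB]
    simp [Matrix.vecMul, dotProduct, Fin.sum_univ_two]
  have h1 : v 1 = (v ᵥ* A) 0 * B 0 1 + (v ᵥ* A) 1 * B 1 1 := by
    conv_lhs => rw [← hvB]
    simp [Matrix.vecMul, dotProduct, Fin.sum_univ_two]
  rw [h0, h1] at h
  linear_combination h

/-- The action of `SL(2, ℤ)` on primitive vectors mod `N`. -/
noncomputable instance : MulAction SL(2, ℤ) (V N) where
  smul g v := ⟨v.1 ᵥ* m N ↑(g⁻¹), prim_vecMul (m_inv_mul N g) v.2⟩
  one_smul v := by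
    apply Subtype.ext
    show v.1 ᵥ* m N ↑((1 : SL(2, ℤ))⁻¹) = v.1
    rw [inv_one, Matrix.SpecialLinearGroup.coe_one, _root_.map_one, Matrix.vecMul_one]
  mul_smul g h v := by
    apply Subtype.ext
    show v.1 ᵥ* m N ↑((g * h)⁻¹) = (v.1 ᵥ* m N ↑(h⁻¹)) ᵥ* m N ↑(g⁻¹)
    rw [_root_.mul_inv_rev, Matrix.SpecialLinearGroup.coe_mul, _root_.map_mul, Matrix.vecMul_vecMul]

lemma smul_coe {N : ℕ} (g : SL(2, ℤ)) (v : V N) : (g • v).1 = v.1 ᵥ* m N ↑(g⁻¹) := rfl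

/-- The base point `(0, 1)`. -/
def eV (N : ℕ) : V N := ⟨![0, 1], by
  simp only [Matrix.cons_val_zero, Matrix.cons_val_one, Matrix.head_cons]
  exact isCoprime_zero_left.mpr isUnit_one⟩

lemma bottomRow {N : ℕ} (g : SL(2, ℤ)) :
    (eV N).1 ᵥ* m N ↑g = ![((g 1 0 : ℤ) : ZMod N), ((g 1 1 : ℤ) : ZMod N)] := by
  funext i
  fin_cases i <;>
    simp [eV, Matrix.vecMul, dotProduct, Fin.sum_univ_two]

lemma mem_stabilizer_iff' {N : ℕ} (g : SL(2, ℤ)) :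
    g ∈ MulAction.stabilizer SL(2, ℤ) (eV N) ↔
      ((g 1 0 : ℤ) : ZMod N) = 0 ∧ ((g 1 1 : ℤ) : ZMod N) = 1 := by
  have hiff : g ∈ MulAction.stabilizer SL(2, ℤ) (eV N) ↔ (eV N).1 ᵥ* m N ↑g = (eV N).1 := by
    rw [MulAction.mem_stabilizer_iff]
    constructor
    · intro hg
      have := congrArg Subtype.val hg
      rw [smul_coe] at this
      exact vecMul_eq_of (m_inv_mul N g) this
    · intro hg
      apply Subtype.ext
      rw [smul_coe]
      exact vecMul_eq_of (m_mul_inv N g) hg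
  rw [hiff, bottomRow, funext_iff, Fin.forall_fin_two]
  simp [eV, eq_comm]

lemma exists_smul_eV {N : ℕ} (hN : 0 < N) (v : V N) : ∃ g : SL(2, ℤ), g • eV N = v := by
  obtain ⟨a, b, ha, hb, hab⟩ := exists_coprime_lift hN (v.1 0) (v.1 1) v.2
  obtain ⟨x, y, hxy⟩ := hab
  have hdet : (Matrix.of ![![y, -x], ![a, b]]).det = 1 := by
    rw [Matrix.det_fin_two_of]
    linear_combination hxy
  set γ : SL(2, ℤ) := ⟨Matrix.of ![![y, -x], ![a, b]], hdet⟩ with hγ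
  refine ⟨γ⁻¹, ?_⟩
  apply Subtype.ext
  rw [smul_coe, inv_inv, bottomRow]
  have h10 : (γ 1 0 : ℤ) = a := rfl
  have h11 : (γ 1 1 : ℤ) = b := rfl
  rw [h10, h11, ha, hb]
  funext i
  fin_cases i <;> simp

noncomputable instance (N : ℕ) [NeZero N] : MulAction.IsPretransitive SL(2, ℤ) (V N) := by
  constructor
  intro u v
  have hN : 0 < N := Nat.pos_of_ne_zero (NeZero.ne N)
  obtain ⟨g, hg⟩ := exists_smul_eV hN u
  obtain ⟨k, hk⟩ := exists_smul_eV hN v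
  refine ⟨k * g⁻¹, ?_⟩
  have : g⁻¹ • u = eV N := by rw [← hg, inv_smul_smul]
  rw [mul_smul, this, hk]

lemma det_rel {N : ℕ} (g : SL(2, ℤ)) :
    ((g 0 0 : ℤ) : ZMod N) * ((g 1 1 : ℤ) : ZMod N)
      - ((g 0 1 : ℤ) : ZMod N) * ((g 1 0 : ℤ) : ZMod N) = 1 := by
  have hdet : (g : Matrix (Fin 2) (Fin 2) ℤ).det = 1 := g.2
  rw [Matrix.det_fin_two] at hdet
  have := congrArg (fun z : ℤ => (z : ZMod N)) hdet
  push_cast at this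
  exact this

/-- The hom from `Γ₀(N)` to units of `ZMod N` given by the lower-right entry. -/
def U (N : ℕ) : Gamma0 N →* (ZMod N)ˣ where
  toFun g :=
    { val := ((g.1 1 1 : ℤ) : ZMod N)
      inv := ((g.1 0 0 : ℤ) : ZMod N)
      val_inv := by
        have h := det_rel (N := N) g.1
        have hc : ((g.1 1 0 : ℤ) : ZMod N) = 0 := g.2
        rw [hc, mul_zero, sub_zero] at h
        rw [mul_comm]
        exact h
      inv_val := by
        have h := det_rel (N := N) g.1
        have hc : ((g.1 1 0 : ℤ) : ZMod N) = 0 := g.2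
        rw [hc, mul_zero, sub_zero] at h
        exact h }
  map_one' := by
    apply Units.ext
    show ((((1 : SL(2, ℤ)) : Matrix (Fin 2) (Fin 2) ℤ) 1 1 : ℤ) : ZMod N) = 1
    simp
  map_mul' g h := by
    apply Units.ext
    show ((((g.1 * h.1 : SL(2, ℤ)) : Matrix (Fin 2) (Fin 2) ℤ) 1 1 : ℤ) : ZMod N) = _
    rw [Matrix.SpecialLinearGroup.coe_mul, (Matrix.two_mul_expl g.1.1 h.1.1).2.2.2]
    have hc : ((g.1 1 0 : ℤ) : ZMod N) = 0 := g.2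
    push_cast
    rw [hc]
    ring

lemma U_surjective (N : ℕ) (hN : 0 < N) : Function.Surjective (U N) := by
  haveI : NeZero N := ⟨hN.ne'⟩
  intro u
  have hcop : Nat.Coprime (u : ZMod N).val N := ZMod.val_coe_unit_coprime u
  have hcopZ : IsCoprime ((u : ZMod N).val : ℤ) (N : ℤ) := Nat.isCoprime_iff_coprime.mpr hcop
  obtain ⟨x, y, hxy⟩ := hcopZ
  set d : ℤ := ((u : ZMod N).val : ℤ)
  have hdet : (Matrix.of ![![x, -y], ![(N : ℤ), d]]).det = 1 := by
    rw [Matrix.det_fin_two_of]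
    linear_combination hxy
  set γ : SL(2, ℤ) := ⟨Matrix.of ![![x, -y], ![(N : ℤ), d]], hdet⟩ with hγ
  have hmem : γ ∈ Gamma0 N := by
    rw [Gamma0_mem]
    show (((N : ℤ) : ZMod N)) = 0
    push_cast
    exact ZMod.natCast_self N
  refine ⟨⟨γ, hmem⟩, ?_⟩
  apply Units.ext
  show ((γ 1 1 : ℤ) : ZMod N) = (u : ZMod N)
  have hd : γ 1 1 = d := rfl
  rw [hd]
  show (((u : ZMod N).val : ℤ) : ZMod N) = (u : ZMod N)
  push_cast
  exact ZMod.natCast_rightInverse (u : ZMod N)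

lemma stab_le_Gamma0 (N : ℕ) :
    MulAction.stabilizer SL(2, ℤ) (eV N) ≤ Gamma0 N := by
  intro g hg
  rw [mem_stabilizer_iff'] at hg
  exact Gamma0_mem.mpr hg.1

lemma subgroupOf_stab_eq (N : ℕ) :
    (MulAction.stabilizer SL(2, ℤ) (eV N)).subgroupOf (Gamma0 N) = (U N).ker := by
  ext g
  rw [Subgroup.mem_subgroupOf, mem_stabilizer_iff', MonoidHom.mem_ker, Units.ext_iff]
  have hc : ((g.1 1 0 : ℤ) : ZMod N) = 0 := g.2
  constructor
  · rintro ⟨-, h2⟩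
    exact h2
  · intro h
    exact ⟨hc, h⟩

lemma card_V_eq_f (N : ℕ) : Nat.card (V N) = f N := by
  refine Nat.card_congr (Equiv.subtypeEquiv (piFinTwoEquiv fun _ => ZMod N) fun v => ?_)
  rfl

lemma key_index (N : ℕ) (hN : 0 < N) :
    N.totient * (Gamma0 N).index = f N := by
  haveI : NeZero N := ⟨hN.ne'⟩
  have h1 : (MulAction.stabilizer SL(2, ℤ) (eV N)).index = Nat.card (V N) :=
    MulAction.index_stabilizer_of_transitive SL(2, ℤ) (eV N)
  have h2 := Subgroup.relIndex_mul_index (stab_le_Gamma0 N)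
  rw [Subgroup.relIndex, subgroupOf_stab_eq, Subgroup.index_ker, h1,
    MonoidHom.range_eq_top.mpr (U_surjective N hN), Subgroup.card_top,
    Nat.card_eq_fintype_card, ZMod.card_units_eq_totient, card_V_eq_f] at h2
  exact h2

lemma f_eq_prod (N : ℕ) (hN : 0 < N) :
    f N = ∏ p ∈ N.primeFactors, f (p ^ N.factorization p) := by
  rw [Nat.multiplicative_factorization f (fun x y h => f_mul x y h) f_one hN.ne',
    Finsupp.prod, Nat.support_factorization]

lemma factor_identity {p k : ℕ} (hp : p.Prime) (hk : k ≠ 0) :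
    (f (p ^ k) : ℚ) = ((p : ℚ) ^ k * (1 - (p : ℚ)⁻¹)) * ((p : ℚ) ^ k * (1 + (p : ℚ)⁻¹)) := by
  obtain ⟨j, rfl⟩ := Nat.exists_eq_succ_of_ne_zero hk
  rw [f_prime_pow hp (Nat.succ_ne_zero j)]
  have hle : (p ^ j) ^ 2 ≤ (p ^ (j + 1)) ^ 2 :=
    Nat.pow_le_pow_left (Nat.pow_le_pow_right hp.pos (by omega)) 2
  have hst : j + 1 - 1 = j := by omega
  rw [hst, Nat.cast_sub hle]
  have hpne : (p : ℚ) ≠ 0 := Nat.cast_ne_zero.mpr hp.pos.ne'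
  push_cast
  field_simp
  ring

end Gamma0IndexAux

theorem gamma0_membership_and_index (N : ℕ) (hN : 0 < N) :
    (∀ γ : SL(2, ℤ), γ ∈ Gamma0 N ↔ (N : ℤ) ∣ ((γ : Matrix (Fin 2) (Fin 2) ℤ) 1 0)) ∧
    ((Gamma0 N).index : ℚ) = N * ∏ p ∈ N.primeFactors, (1 + (p : ℚ)⁻¹) := by
  constructor
  · intro γ
    exact Gamma0_mem.trans (ZMod.intCast_zmod_eq_zero_iff_dvd _ N)
  · have hkey := Gamma0IndexAux.key_index N hN
    have hφ : (N.totient : ℚ) ≠ 0 := Nat.cast_ne_zero.mpr (Nat.totient_pos.mpr hN).ne'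
    refine mul_left_cancel₀ hφ ?_
    have hL : (N.totient : ℚ) * ((Gamma0 N).index : ℚ) = (Gamma0IndexAux.f N : ℚ) := by
      exact_mod_cast congrArg (fun n : ℕ => (n : ℚ)) hkey
    rw [hL, Nat.totient_eq_mul_prod_factors]
    have hN2 : (N : ℚ) = ∏ p ∈ N.primeFactors, (p : ℚ) ^ N.factorization p := by
      conv_lhs => rw [← Nat.factorization_prod_pow_eq_self hN.ne']
      rw [Finsupp.prod, Nat.support_factorization]
      push_cast
      rfl
    rw [Gamma0IndexAux.f_eq_prod N hN]
    push_cast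
    rw [hN2, ← Finset.prod_mul_distrib, ← Finset.prod_mul_distrib, ← Finset.prod_mul_distrib]
    refine Finset.prod_congr rfl fun p hp => ?_
    have hpp := Nat.prime_of_mem_primeFactors hp
    have hk : N.factorization p ≠ 0 := by
      have := (Nat.Prime.dvd_iff_one_le_factorization hpp hN.ne').mp
        (Nat.dvd_of_mem_primeFactors hp)
      omega
    rw [Gamma0IndexAux.factor_identity hpp hk]
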